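/- arXiv:2508.02346 — 2 statements merged into one kernel-verified Lean document; each statement's English description precedes it below -/
import Mathlib

section
/- A collection of functions separating all weighted graphs up to isomorphism also solves the graph isomorphism problem for unweighted graphs: if functions {O_k} satisfy (G₁ ≅ G₂ ⟺ O_k(G₁) = O_k(G₂) for all k) on weighted graphs with N nodes, then for any two unweighted graphs on n nodes with 2n ≤ N, weighting one uniformly by 2 and the other uniformly by 3 and taking their disjoint union G, versus the weight-swapped union G', the graphs G and G' are isomorphic as weighted graphs if and only if the original unweighted graphs are isomorphic. -/
/-- The relabeling action of `S_N` on weighted graphs: `(σ·G)_{ij} = G_{σ⁻¹(i)σ⁻¹(j)}`. -/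
def relabel {N : ℕ} (σ : Equiv.Perm (Fin N)) (G : Matrix (Fin N) (Fin N) ℝ) :
    Matrix (Fin N) (Fin N) ℝ :=
  fun i j => G (σ⁻¹ i) (σ⁻¹ j)

/-- The disjoint union of two weighted graphs on `n` nodes each, placed as two diagonal
blocks inside an `N×N` matrix (padded by zero-weight isolated nodes). -/
noncomputable def unionW (n N : ℕ) (A B : Matrix (Fin n) (Fin n) ℝ) :
    Matrix (Fin N) (Fin N) ℝ :=
  fun i j =>
    if h : (i : ℕ) < n ∧ (j : ℕ) < n then A ⟨i, h.1⟩ ⟨j, h.2⟩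
    else if h' : n ≤ (i : ℕ) ∧ (i : ℕ) < 2 * n ∧ n ≤ (j : ℕ) ∧ (j : ℕ) < 2 * n then
      B ⟨(i : ℕ) - n, by omega⟩ ⟨(j : ℕ) - n, by omega⟩
    else 0

theorem Equiv.Perm.inv_apply_self {α : Type*} (f : Equiv.Perm α) (x : α) : f⁻¹ (f x) = x := by
  simp

theorem Equiv.Perm.apply_inv_self {α : Type*} (f : Equiv.Perm α) (x : α) : f (f⁻¹ x) = x := by
  simp

private lemma unionW_AA {n N : ℕ} (A B : Matrix (Fin n) (Fin n) ℝ) (i j : Fin N)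
    (hi : (i : ℕ) < n) (hj : (j : ℕ) < n) :
    unionW n N A B i j = A ⟨i, hi⟩ ⟨j, hj⟩ := by
  simp only [unionW]; rw [dif_pos ⟨hi, hj⟩]

private lemma unionW_BB {n N : ℕ} (A B : Matrix (Fin n) (Fin n) ℝ) (i j : Fin N)
    (hi : n ≤ (i : ℕ)) (hi2 : (i : ℕ) < 2 * n) (hj : n ≤ (j : ℕ)) (hj2 : (j : ℕ) < 2 * n) :
    unionW n N A B i j = B ⟨(i : ℕ) - n, by omega⟩ ⟨(j : ℕ) - n, by omega⟩ := by
  simp only [unionW]; rw [dif_neg (by omega), dif_pos ⟨hi, hi2, hj, hj2⟩]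

private lemma unionW_zero {n N : ℕ} (A B : Matrix (Fin n) (Fin n) ℝ) (i j : Fin N)
    (h : ¬((i : ℕ) < n ∧ (j : ℕ) < n))
    (h' : ¬(n ≤ (i : ℕ) ∧ (i : ℕ) < 2 * n ∧ n ≤ (j : ℕ) ∧ (j : ℕ) < 2 * n)) :
    unionW n N A B i j = 0 := by
  simp only [unionW]; rw [dif_neg h, dif_neg h']

/-- If an entry of `(2A) ⊔ (3B)` equals `2`, it must be in the `A` block with `A = 1`. -/
private lemma eq_two_first {n N : ℕ} (A B : Matrix (Fin n) (Fin n) ℝ)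
    (hA01 : ∀ i j, A i j = 0 ∨ A i j = 1) (hB01 : ∀ i j, B i j = 0 ∨ B i j = 1)
    (i j : Fin N) (h : unionW n N ((2 : ℝ) • A) ((3 : ℝ) • B) i j = 2) :
    ∃ (hi : (i : ℕ) < n) (hj : (j : ℕ) < n), A ⟨i, hi⟩ ⟨j, hj⟩ = 1 := by
  by_cases h1 : (i : ℕ) < n ∧ (j : ℕ) < n
  · refine ⟨h1.1, h1.2, ?_⟩
    rw [unionW_AA _ _ _ _ h1.1 h1.2, Matrix.smul_apply, smul_eq_mul] at h
    rcases hA01 ⟨i, h1.1⟩ ⟨j, h1.2⟩ with h0 | h0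
    · rw [h0] at h; norm_num at h
    · exact h0
  · by_cases h2 : n ≤ (i : ℕ) ∧ (i : ℕ) < 2 * n ∧ n ≤ (j : ℕ) ∧ (j : ℕ) < 2 * n
    · rw [unionW_BB _ _ _ _ h2.1 h2.2.1 h2.2.2.1 h2.2.2.2, Matrix.smul_apply,
        smul_eq_mul] at h
      rcases hB01 ⟨(i : ℕ) - n, by omega⟩ ⟨(j : ℕ) - n, by omega⟩ with h0 | h0 <;>
        rw [h0] at h <;> norm_num at h
    · rw [unionW_zero _ _ _ _ h1 h2] at h; norm_num at h

/-- If an entry of `(3A) ⊔ (2B)` equals `2`, it must be in the `B` block with `B = 1`. -/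
private lemma eq_two_second {n N : ℕ} (A B : Matrix (Fin n) (Fin n) ℝ)
    (hA01 : ∀ i j, A i j = 0 ∨ A i j = 1) (hB01 : ∀ i j, B i j = 0 ∨ B i j = 1)
    (i j : Fin N) (h : unionW n N ((3 : ℝ) • A) ((2 : ℝ) • B) i j = 2) :
    ∃ (hi : n ≤ (i : ℕ) ∧ (i : ℕ) < 2 * n) (hj : n ≤ (j : ℕ) ∧ (j : ℕ) < 2 * n),
      B ⟨(i : ℕ) - n, by omega⟩ ⟨(j : ℕ) - n, by omega⟩ = 1 := by
  by_cases h1 : (i : ℕ) < n ∧ (j : ℕ) < n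
  · rw [unionW_AA _ _ _ _ h1.1 h1.2, Matrix.smul_apply, smul_eq_mul] at h
    rcases hA01 ⟨i, h1.1⟩ ⟨j, h1.2⟩ with h0 | h0 <;> rw [h0] at h <;> norm_num at h
  · by_cases h2 : n ≤ (i : ℕ) ∧ (i : ℕ) < 2 * n ∧ n ≤ (j : ℕ) ∧ (j : ℕ) < 2 * n
    · refine ⟨⟨h2.1, h2.2.1⟩, ⟨h2.2.2.1, h2.2.2.2⟩, ?_⟩
      rw [unionW_BB _ _ _ _ h2.1 h2.2.1 h2.2.2.1 h2.2.2.2, Matrix.smul_apply,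
        smul_eq_mul] at h
      rcases hB01 ⟨(i : ℕ) - n, by omega⟩ ⟨(j : ℕ) - n, by omega⟩ with h0 | h0
      · rw [h0] at h; norm_num at h
      · exact h0
    · rw [unionW_zero _ _ _ _ h1 h2] at h; norm_num at h

/-- A complete set of observables on weighted graphs also solves the graph isomorphism
problem: for unweighted graphs `A`, `B`, the weighted graph `G = (2·A) ⊔ (3·B)` is
isomorphic to the weight-swapped `G' = (3·A) ⊔ (2·B)` iff `A ≅ B`. -/
theorem stmt16 (N n : ℕ) (hn : 2 * n ≤ N) (κ : Type*)
    (O : κ → Matrix (Fin N) (Fin N) ℝ → ℝ)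
    (hcomplete : ∀ G₁ G₂ : Matrix (Fin N) (Fin N) ℝ, G₁.IsSymm → G₂.IsSymm →
      ((∃ σ : Equiv.Perm (Fin N), relabel σ G₁ = G₂) ↔ ∀ k, O k G₁ = O k G₂))
    (A B : Matrix (Fin n) (Fin n) ℝ) (hA : A.IsSymm) (hB : B.IsSymm)
    (hA01 : ∀ i j, A i j = 0 ∨ A i j = 1) (hB01 : ∀ i j, B i j = 0 ∨ B i j = 1)
    (hAd : ∀ i, A i i = 0) (hBd : ∀ i, B i i = 0) :
    (∃ σ : Equiv.Perm (Fin N),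
        relabel σ (unionW n N ((2 : ℝ) • A) ((3 : ℝ) • B))
          = unionW n N ((3 : ℝ) • A) ((2 : ℝ) • B)) ↔
      ∃ τ : Equiv.Perm (Fin n), relabel τ A = B := by
  classical
  constructor
  · rintro ⟨σ, hσ⟩
    have hσ' : ∀ i j : Fin N,
        unionW n N ((2 : ℝ) • A) ((3 : ℝ) • B) (σ⁻¹ i) (σ⁻¹ j)
          = unionW n N ((3 : ℝ) • A) ((2 : ℝ) • B) i j :=
      fun i j => congrFun (congrFun hσ i) j
    set ιA : Fin n → Fin N := fun i => ⟨i, by have := i.isLt; omega⟩ with hιA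
    set ιB : Fin n → Fin N := fun i => ⟨n + i, by have := i.isLt; omega⟩ with hιB
    set P : Fin n → Prop := fun i => ∃ j, B i j ≠ 0 with hPdef
    set Q : Fin n → Prop := fun i => ∃ j, A i j ≠ 0 with hQdef
    -- key lemma L1 : images of B-edges under σ⁻¹ land in the A block as A-edges
    have L1 : ∀ i j : Fin n, B i j = 1 →
        ∃ (hi : ((σ⁻¹ (ιB i) : Fin N) : ℕ) < n) (hj : ((σ⁻¹ (ιB j) : Fin N) : ℕ) < n),
          A ⟨(σ⁻¹ (ιB i) : Fin N), hi⟩ ⟨(σ⁻¹ (ιB j) : Fin N), hj⟩ = 1 := by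
      intro i j hb
      have h := hσ' (ιB i) (ιB j)
      rw [unionW_BB ((3:ℝ) • A) ((2:ℝ) • B) (ιB i) (ιB j) (by simp [hιB]) (by simp [hιB]; omega)
        (by simp [hιB]) (by simp [hιB]; omega)] at h
      have e1 : (⟨((ιB i : Fin N) : ℕ) - n, by simp [hιB]⟩ : Fin n) = i := by
        apply Fin.ext; simp [hιB]
      have e2 : (⟨((ιB j : Fin N) : ℕ) - n, by simp [hιB]⟩ : Fin n) = j := by
        apply Fin.ext; simp [hιB]
      rw [e1, e2, Matrix.smul_apply, smul_eq_mul, hb, mul_one] at h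
      exact eq_two_first A B hA01 hB01 _ _ h
    -- key lemma L2 : images of A-edges under σ land in the B block as B-edges
    have L2 : ∀ i j : Fin n, A i j = 1 →
        ∃ (hi : n ≤ ((σ (ιA i) : Fin N) : ℕ) ∧ ((σ (ιA i) : Fin N) : ℕ) < 2 * n)
          (hj : n ≤ ((σ (ιA j) : Fin N) : ℕ) ∧ ((σ (ιA j) : Fin N) : ℕ) < 2 * n),
          B ⟨((σ (ιA i) : Fin N) : ℕ) - n, by omega⟩
            ⟨((σ (ιA j) : Fin N) : ℕ) - n, by omega⟩ = 1 := by
      intro i j ha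
      have h := hσ' (σ (ιA i)) (σ (ιA j))
      rw [Equiv.Perm.inv_apply_self, Equiv.Perm.inv_apply_self] at h
      rw [unionW_AA _ _ _ _ (show ((ιA i : Fin N) : ℕ) < n by simp [hιA])
        (show ((ιA j : Fin N) : ℕ) < n by simp [hιA])] at h
      have e1 : (⟨((ιA i : Fin N) : ℕ), by simp [hιA]⟩ : Fin n) = i := by
        apply Fin.ext; simp [hιA]
      have e2 : (⟨((ιA j : Fin N) : ℕ), by simp [hιA]⟩ : Fin n) = j := by
        apply Fin.ext; simp [hιA]
      rw [e1, e2, Matrix.smul_apply, smul_eq_mul, ha, mul_one] at h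
      exact eq_two_second A B hA01 hB01 _ _ h.symm
    have hg : ∀ i : Fin n, P i → ((σ⁻¹ (ιB i) : Fin N) : ℕ) < n := by
      rintro i ⟨j, hj⟩
      have hb : B i j = 1 := (hB01 i j).resolve_left hj
      obtain ⟨hi, -, -⟩ := L1 i j hb
      exact hi
    have hh : ∀ i : Fin n, Q i →
        n ≤ ((σ (ιA i) : Fin N) : ℕ) ∧ ((σ (ιA i) : Fin N) : ℕ) < 2 * n := by
      rintro i ⟨j, hj⟩
      have ha : A i j = 1 := (hA01 i j).resolve_left hj
      obtain ⟨hi, -, -⟩ := L2 i j ha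
      exact hi
    -- total versions of the partial bijections
    set g : Fin n → Fin n := fun i =>
      if h : ((σ⁻¹ (ιB i) : Fin N) : ℕ) < n then ⟨(σ⁻¹ (ιB i) : Fin N), h⟩ else i with hgdef
    set h : Fin n → Fin n := fun i =>
      if h : n ≤ ((σ (ιA i) : Fin N) : ℕ) ∧ ((σ (ιA i) : Fin N) : ℕ) < 2 * n then
        ⟨((σ (ιA i) : Fin N) : ℕ) - n, by omega⟩ else i with hhdef
    have hgval : ∀ (i : Fin n) (hi : ((σ⁻¹ (ιB i) : Fin N) : ℕ) < n),
        g i = ⟨(σ⁻¹ (ιB i) : Fin N), hi⟩ := by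
      intro i hi; simp only [hgdef]; rw [dif_pos hi]
    have hhval : ∀ (i : Fin n)
        (hi : n ≤ ((σ (ιA i) : Fin N) : ℕ) ∧ ((σ (ιA i) : Fin N) : ℕ) < 2 * n),
        h i = ⟨((σ (ιA i) : Fin N) : ℕ) - n, by omega⟩ := by
      intro i hi; simp only [hhdef]; rw [dif_pos hi]
    -- the equivalence between non-isolated vertices
    have hQg : ∀ i : Fin n, P i → Q (g i) := by
      rintro i ⟨j, hj⟩
      have hb : B i j = 1 := (hB01 i j).resolve_left hj
      obtain ⟨hi, hj', hval⟩ := L1 i j hb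
      rw [hgval i hi]
      exact ⟨⟨(σ⁻¹ (ιB j) : Fin N), hj'⟩, by rw [hval]; norm_num⟩
    have hPh : ∀ i : Fin n, Q i → P (h i) := by
      rintro i ⟨j, hj⟩
      have ha : A i j = 1 := (hA01 i j).resolve_left hj
      obtain ⟨hi, hj', hval⟩ := L2 i j ha
      rw [hhval i hi]
      exact ⟨⟨((σ (ιA j) : Fin N) : ℕ) - n, by omega⟩, by rw [hval]; norm_num⟩
    have hgh : ∀ i : Fin n, P i → h (g i) = i := by
      intro i hi
      have hgi := hg i hi
      rw [hgval i hgi]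
      have key : ιA (⟨(σ⁻¹ (ιB i) : Fin N), hgi⟩ : Fin n) = σ⁻¹ (ιB i) := by
        apply Fin.ext; simp [hιA]
      have hcond : n ≤ ((σ (ιA (⟨(σ⁻¹ (ιB i) : Fin N), hgi⟩ : Fin n)) : Fin N) : ℕ) ∧
          ((σ (ιA (⟨(σ⁻¹ (ιB i) : Fin N), hgi⟩ : Fin n)) : Fin N) : ℕ) < 2 * n := by
        rw [key, Equiv.Perm.apply_inv_self]
        simp [hιB]; have := i.isLt; omega
      rw [hhval _ hcond]
      apply Fin.ext
      simp only [key, Equiv.Perm.apply_inv_self]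
      simp [hιB]
    have hhg : ∀ i : Fin n, Q i → g (h i) = i := by
      intro i hi
      have hhi := hh i hi
      rw [hhval i hhi]
      have key : ιB (⟨((σ (ιA i) : Fin N) : ℕ) - n, by omega⟩ : Fin n) = σ (ιA i) := by
        apply Fin.ext; simp [hιB]; omega
      have hcond : ((σ⁻¹ (ιB (⟨((σ (ιA i) : Fin N) : ℕ) - n, by omega⟩ : Fin n)) : Fin N) : ℕ) < n := by
        rw [key, Equiv.Perm.inv_apply_self]; simp [hιA]
      rw [hgval _ hcond]
      apply Fin.ext
      simp only [key, Equiv.Perm.inv_apply_self]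
      rfl
    let e : {i : Fin n // P i} ≃ {i : Fin n // Q i} :=
      { toFun := fun i => ⟨g i.1, hQg i.1 i.2⟩
        invFun := fun i => ⟨h i.1, hPh i.1 i.2⟩
        left_inv := fun i => Subtype.ext (hgh i.1 i.2)
        right_inv := fun i => Subtype.ext (hhg i.1 i.2) }
    have hcard : Fintype.card {i : Fin n // ¬ P i} = Fintype.card {i : Fin n // ¬ Q i} := by
      rw [Fintype.card_subtype_compl, Fintype.card_subtype_compl, Fintype.card_congr e]
    let e2 : {i : Fin n // ¬ P i} ≃ {i : Fin n // ¬ Q i} := Fintype.equivOfCardEq hcard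
    let f : Fin n ≃ Fin n :=
      (Equiv.sumCompl P).symm.trans ((Equiv.sumCongr e e2).trans (Equiv.sumCompl Q))
    have hfP : ∀ (i : Fin n) (hi : P i), f i = g i := by
      intro i hi
      simp only [f, Equiv.trans_apply, Equiv.sumCompl_symm_apply_of_pos hi,
        Equiv.sumCongr_apply, Sum.map_inl, Equiv.sumCompl_apply_inl]
      rfl
    have hfnP : ∀ (i : Fin n) (hi : ¬ P i), ¬ Q (f i) := by
      intro i hi
      have : f i = (e2 ⟨i, hi⟩).1 := by
        simp only [f, Equiv.trans_apply, Equiv.sumCompl_symm_apply_of_neg hi,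
          Equiv.sumCongr_apply, Sum.map_inr, Equiv.sumCompl_apply_inr]
      rw [this]
      exact (e2 ⟨i, hi⟩).2
    refine ⟨f.symm, ?_⟩
    funext i j
    show A ((f.symm)⁻¹ i) ((f.symm)⁻¹ j) = B i j
    rw [Equiv.Perm.inv_def, Equiv.symm_symm]
    by_cases hi : P i
    · by_cases hj : P j
      · rw [hfP i hi, hfP j hj, hgval i (hg i hi), hgval j (hg j hj)]
        rcases hB01 i j with hb | hb
        · -- B i j = 0, non-edge is preserved
          have h := hσ' (ιB i) (ιB j)
          rw [unionW_BB ((3:ℝ) • A) ((2:ℝ) • B) (ιB i) (ιB j) (by simp [hιB])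
            (by simp [hιB]; omega) (by simp [hιB]) (by simp [hιB]; omega)] at h
          have e1 : (⟨((ιB i : Fin N) : ℕ) - n, by simp [hιB]⟩ : Fin n) = i := by
            apply Fin.ext; simp [hιB]
          have e2' : (⟨((ιB j : Fin N) : ℕ) - n, by simp [hιB]⟩ : Fin n) = j := by
            apply Fin.ext; simp [hιB]
          rw [e1, e2', Matrix.smul_apply, smul_eq_mul, hb, mul_zero] at h
          rw [unionW_AA _ _ _ _ (hg i hi) (hg j hj), Matrix.smul_apply, smul_eq_mul] at h
          rw [hb]
          linarith
        · obtain ⟨hi', hj', hval⟩ := L1 i j hb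
          rw [hb]; exact hval
      · have hb : B i j = 0 := by
          by_contra hne
          exact hj (show ∃ k, B j k ≠ 0 from ⟨i, by rw [hB.apply]; exact hne⟩)
        have hq : ∀ k, A (f j) k = 0 := by
          have hq0 := hfnP j hj
          simp only [hQdef] at hq0
          push_neg at hq0
          exact hq0
        rw [hb, hA.apply]
        exact hq (f i)
    · have hb : B i j = 0 := by
        by_contra hne
        exact hi (show ∃ k, B i k ≠ 0 from ⟨j, hne⟩)
      have hq : ∀ k, A (f i) k = 0 := by
        have hq0 := hfnP i hi
        simp only [hQdef] at hq0
        push_neg at hq0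
        exact hq0
      rw [hb]
      exact hq (f j)
  · rintro ⟨τ, hτ⟩
    have hτ' : ∀ i j : Fin n, A (τ⁻¹ i) (τ⁻¹ j) = B i j :=
      fun i j => congrFun (congrFun hτ i) j
    set π : Fin N → Fin N := fun i =>
      if h : (i : ℕ) < n then ⟨n + (τ ⟨i, h⟩ : Fin n), by have := (τ ⟨i, h⟩).isLt; omega⟩
      else if h2 : (i : ℕ) < 2 * n then
        ⟨(τ⁻¹ ⟨(i : ℕ) - n, by omega⟩ : Fin n), by
          have := (τ⁻¹ (⟨(i : ℕ) - n, by omega⟩ : Fin n)).isLt; omega⟩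
      else i with hπdef
    have hπ1 : ∀ (i : Fin N) (h : (i : ℕ) < n), ∃ x : Fin N, π i = x ∧
        ∃ hx : n ≤ (x : ℕ) ∧ (x : ℕ) < 2 * n,
          (⟨(x : ℕ) - n, by omega⟩ : Fin n) = τ ⟨i, h⟩ := by
      intro i h
      refine ⟨⟨n + (τ ⟨i, h⟩ : Fin n), by have := (τ ⟨i, h⟩).isLt; omega⟩, ?_, ?_, ?_⟩
      · simp only [hπdef]; rw [dif_pos h]
      · have := (τ ⟨i, h⟩).isLt; constructor <;> simp <;> omega
      · apply Fin.ext; simp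
    have hπ2 : ∀ (i : Fin N) (h1 : n ≤ (i : ℕ)) (h2 : (i : ℕ) < 2 * n), ∃ x : Fin N,
        π i = x ∧ ∃ hx : (x : ℕ) < n,
          (⟨(x : ℕ), hx⟩ : Fin n) = τ⁻¹ ⟨(i : ℕ) - n, by omega⟩ := by
      intro i h1 h2
      refine ⟨⟨(τ⁻¹ ⟨(i : ℕ) - n, by omega⟩ : Fin n), by
        have := (τ⁻¹ (⟨(i : ℕ) - n, by omega⟩ : Fin n)).isLt; omega⟩, ?_, ?_, ?_⟩
      · simp only [hπdef]; rw [dif_neg (by omega), dif_pos h2]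
      · simp
      · apply Fin.ext; simp
    have hπ3 : ∀ (i : Fin N) (h : 2 * n ≤ (i : ℕ)), π i = i := by
      intro i h; simp only [hπdef]; rw [dif_neg (by omega), dif_neg (by omega)]
    have hinv : Function.Involutive π := by
      intro i
      rcases Nat.lt_or_ge (i : ℕ) n with h | h
      · obtain ⟨x, hx, hb, he⟩ := hπ1 i h
        rw [hx]
        obtain ⟨y, hy, hy', he'⟩ := hπ2 x hb.1 hb.2
        rw [hy]
        rw [he, Equiv.Perm.inv_apply_self] at he'
        apply Fin.ext
        have := congrArg Fin.val he'
        simpa using this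
      · rcases Nat.lt_or_ge (i : ℕ) (2 * n) with h2 | h2
        · obtain ⟨x, hx, hx', he⟩ := hπ2 i h h2
          rw [hx]
          obtain ⟨y, hy, hb, he'⟩ := hπ1 x hx'
          rw [hy]
          rw [he, Equiv.Perm.apply_inv_self] at he'
          apply Fin.ext
          have := congrArg Fin.val he'
          simp at this
          omega
        · rw [hπ3 i h2, hπ3 i h2]
    refine ⟨hinv.toPerm π, ?_⟩
    have hσinv : ∀ x, (hinv.toPerm π)⁻¹ x = π x := fun x => rfl
    funext i j
    show unionW n N ((2 : ℝ) • A) ((3 : ℝ) • B) ((hinv.toPerm π)⁻¹ i) ((hinv.toPerm π)⁻¹ j)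
      = unionW n N ((3 : ℝ) • A) ((2 : ℝ) • B) i j
    rw [hσinv, hσinv]
    rcases Nat.lt_or_ge (i : ℕ) n with hi | hi
    · obtain ⟨x, hx, hbx, hex⟩ := hπ1 i hi
      rcases Nat.lt_or_ge (j : ℕ) n with hj | hj
      · -- A' block on the right, B block on the left
        obtain ⟨y, hy, hby, hey⟩ := hπ1 j hj
        have hL := unionW_BB ((2:ℝ) • A) ((3:ℝ) • B) x y hbx.1 hbx.2 hby.1 hby.2
        have hR := unionW_AA ((3:ℝ) • A) ((2:ℝ) • B) i j hi hj
        rw [hx, hy, hL, hR, hex, hey]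
        simp only [Matrix.smul_apply, smul_eq_mul]
        have ht := hτ' (τ ⟨i, hi⟩) (τ ⟨j, hj⟩)
        rw [Equiv.Perm.inv_apply_self, Equiv.Perm.inv_apply_self] at ht
        rw [← ht]
      · rcases Nat.lt_or_ge (j : ℕ) (2 * n) with hj2 | hj2
        · obtain ⟨y, hy, hy', hey⟩ := hπ2 j hj hj2
          have hL := unionW_zero ((2:ℝ) • A) ((3:ℝ) • B) x y
            (by omega) (by omega)
          have hR := unionW_zero ((3:ℝ) • A) ((2:ℝ) • B) i j (by omega) (by omega)
          rw [hx, hy, hL, hR]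
        · have hL := unionW_zero ((2:ℝ) • A) ((3:ℝ) • B) x j
            (by omega) (by omega)
          have hR := unionW_zero ((3:ℝ) • A) ((2:ℝ) • B) i j (by omega) (by omega)
          rw [hx, hπ3 j hj2, hL, hR]
    · rcases Nat.lt_or_ge (i : ℕ) (2 * n) with hi2 | hi2
      · obtain ⟨x, hx, hx', hex⟩ := hπ2 i hi hi2
        rcases Nat.lt_or_ge (j : ℕ) n with hj | hj
        · obtain ⟨y, hy, hby, hey⟩ := hπ1 j hj
          have hL := unionW_zero ((2:ℝ) • A) ((3:ℝ) • B) x y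
            (by omega) (by omega)
          have hR := unionW_zero ((3:ℝ) • A) ((2:ℝ) • B) i j (by omega) (by omega)
          rw [hx, hy, hL, hR]
        · rcases Nat.lt_or_ge (j : ℕ) (2 * n) with hj2 | hj2
          · -- B' block on the right, A block on the left
            obtain ⟨y, hy, hy', hey⟩ := hπ2 j hj hj2
            have hL := unionW_AA ((2:ℝ) • A) ((3:ℝ) • B) x y hx' hy'
            have hR := unionW_BB ((3:ℝ) • A) ((2:ℝ) • B) i j hi hi2 hj hj2
            rw [hx, hy, hL, hR, hex, hey]
            simp only [Matrix.smul_apply, smul_eq_mul]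
            rw [hτ']
          · have hL := unionW_zero ((2:ℝ) • A) ((3:ℝ) • B) x j
              (by omega) (by omega)
            have hR := unionW_zero ((3:ℝ) • A) ((2:ℝ) • B) i j (by omega) (by omega)
            rw [hx, hπ3 j hj2, hL, hR]
      · rcases Nat.lt_or_ge (j : ℕ) n with hj | hj
        · obtain ⟨y, hy, hby, hey⟩ := hπ1 j hj
          have hL := unionW_zero ((2:ℝ) • A) ((3:ℝ) • B) i y
            (by omega) (by omega)
          have hR := unionW_zero ((3:ℝ) • A) ((2:ℝ) • B) i j (by omega) (by omega)
          rw [hπ3 i hi2, hy, hL, hR]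
        · rcases Nat.lt_or_ge (j : ℕ) (2 * n) with hj2 | hj2
          · obtain ⟨y, hy, hy', hey⟩ := hπ2 j hj hj2
            have hL := unionW_zero ((2:ℝ) • A) ((3:ℝ) • B) i y
              (by omega) (by omega)
            have hR := unionW_zero ((3:ℝ) • A) ((2:ℝ) • B) i j (by omega) (by omega)
            rw [hπ3 i hi2, hy, hL, hR]
          · have hL := unionW_zero ((2:ℝ) • A) ((3:ℝ) • B) i j (by omega) (by omega)
            have hR := unionW_zero ((3:ℝ) • A) ((2:ℝ) • B) i j (by omega) (by omega)
            rw [hπ3 i hi2, hπ3 j hj2, hL, hR]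
end

section
/- The invariant graph polynomial of the 'path of length 2' multigraph on 3 nodes, 6·R(x_{12}·x_{13}) evaluated on weighted graphs over 3 nodes, equals 2(x_{12}x_{13} + x_{12}x_{23} + x_{13}x_{23}) and cannot be written as a polynomial in the two degree-1 invariants Q₁ = x_{11}+x_{22}+x_{33} and Q₂ = x_{12}+x_{13}+x_{23} alone (in particular, it is not a linear combination of Q₁², Q₁Q₂, Q₂², Q₁, Q₂, 1). -/
open MvPolynomial

/-- The degree-2 invariant `x₁₂x₁₃ + x₁₂x₂₃ + x₁₃x₂₃` (sum over paths of length 2). -/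
noncomputable def Ppoly : MvPolynomial (Sym2 (Fin 3)) ℝ :=
  X s(0, 1) * X s(0, 2) + X s(0, 1) * X s(1, 2) + X s(0, 2) * X s(1, 2)

/-- The degree-1 node invariant `Q₁ = x₁₁ + x₂₂ + x₃₃`. -/
noncomputable def Q1 : MvPolynomial (Sym2 (Fin 3)) ℝ :=
  X s(0, 0) + X s(1, 1) + X s(2, 2)

/-- The degree-1 edge invariant `Q₂ = x₁₂ + x₁₃ + x₂₃`. -/
noncomputable def Q2 : MvPolynomial (Sym2 (Fin 3)) ℝ :=
  X s(0, 1) + X s(0, 2) + X s(1, 2)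

/-- The Reynolds operator (group average over S₃) on polynomials in the weights of a
3-node weighted graph. -/
noncomputable def Rey3 (p : MvPolynomial (Sym2 (Fin 3)) ℝ) : MvPolynomial (Sym2 (Fin 3)) ℝ :=
  ((6 : ℝ))⁻¹ • ∑ σ : Equiv.Perm (Fin 3), rename (Sym2.map σ) p

lemma sum_perm : ∑ σ : Equiv.Perm (Fin 3),
    rename (Sym2.map σ) ((X s(0,1) : MvPolynomial (Sym2 (Fin 3)) ℝ) * X s(0,2)) = 2 * Ppoly := by
  have key : ∀ σ : Equiv.Perm (Fin 3),
      rename (Sym2.map σ) ((X s(0,1) : MvPolynomial (Sym2 (Fin 3)) ℝ) * X s(0,2)) =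
      X (Sym2.map σ s(0,1)) * X (Sym2.map σ s(0,2)) := by
    intro σ; simp [rename_X]
  rw [show (Finset.univ : Finset (Equiv.Perm (Fin 3))) =
      {1, Equiv.swap 0 1, Equiv.swap 0 2, Equiv.swap 1 2,
       Equiv.swap 0 1 * Equiv.swap 0 2, Equiv.swap 0 2 * Equiv.swap 0 1} from by decide]
  rw [Finset.sum_insert (by decide), Finset.sum_insert (by decide),
      Finset.sum_insert (by decide), Finset.sum_insert (by decide),
      Finset.sum_insert (by decide), Finset.sum_singleton]
  simp only [key, Sym2.map_pair_eq, Equiv.Perm.mul_apply, Equiv.Perm.one_apply,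
    Equiv.swap_apply_def]
  norm_num [Fin.ext_iff]
  rw [show s((1:Fin 3),0) = s(0,1) from by decide, show s((2:Fin 3),1) = s(1,2) from by decide,
      show s((2:Fin 3),0) = s(0,2) from by decide]
  rw [Ppoly]; ring

lemma six_rey : (6 : ℝ) • Rey3 (X s(0, 1) * X s(0, 2)) = 2 * Ppoly := by
  rw [Rey3, smul_smul, show (6:ℝ)*(6:ℝ)⁻¹ = 1 by norm_num, one_smul, sum_perm]

/-- `6·R(x₁₂x₁₃) = 2(x₁₂x₁₃ + x₁₂x₂₃ + x₁₃x₂₃)`, and this glocal observable is not a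
polynomial in the purely global degree-1 invariants `Q₁, Q₂` alone. -/
theorem stmt19 :
    (6 : ℝ) • Rey3 (X s(0, 1) * X s(0, 2)) = 2 * Ppoly ∧
    ¬ ∃ F : MvPolynomial (Fin 2) ℝ,
        (6 : ℝ) • Rey3 (X s(0, 1) * X s(0, 2)) = MvPolynomial.aeval ![Q1, Q2] F := by
  refine ⟨six_rey, ?_⟩
  rintro ⟨F, hF⟩
  rw [six_rey] at hF
  -- two evaluation points with same Q1, Q2 but different Ppoly
  set v : Sym2 (Fin 3) → ℝ := fun e => if e = s(0,1) then 1 else 0 with hv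
  set w : Sym2 (Fin 3) → ℝ := fun e =>
    if e = s(0,1) ∨ e = s(0,2) ∨ e = s(1,2) then (3:ℝ)⁻¹ else 0 with hw
  have hQ : ∀ i : Fin 2, aeval v (![Q1, Q2] i) = aeval w (![Q1, Q2] i) := by
    intro i
    fin_cases i <;>
      simp (config := { decide := true }) [Q1, Q2, hv, hw]; norm_num
  have hev := congrArg (aeval v) hF
  have hew := congrArg (aeval w) hF
  rw [comp_aeval_apply] at hev hew
  have hvv : aeval v (2 * Ppoly) = 0 := by
    simp (config := { decide := true }) [Ppoly, hv]
  have hww : aeval w (2 * Ppoly) = 2/3 := by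
    simp (config := { decide := true }) [Ppoly, hw]
    norm_num
  have hfun : (fun i => aeval v (![Q1, Q2] i)) = fun i => aeval w (![Q1, Q2] i) :=
    funext hQ
  rw [hfun] at hev
  have : (0 : ℝ) = 2/3 := by rw [← hvv, ← hww, hev, hew]
  norm_num at this
end
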